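/- Let x ∈ ℂ^{n₁×n₂} whose 2D DFT never vanishes, and let s = (s₁,s₂) with gcd(s₁,n₁) = 1, gcd(s₂,n₂) = 1, and gcd(n₁,n₂) = 1. Then x is uniquely determined up to global phase by the 3n₁n₂ real numbers |F x|², |F(x + 𝒟ˢx)|², |F(x − i𝒟ˢx)|², where 𝒟ˢ is the modulation [𝒟ˢx][t₁,t₂] = e^{2πis₁t₁/n₁} e^{2πis₂t₂/n₂} x[t₁,t₂]. -/

import Mathlib

noncomputable def dft2 {n₁ n₂ : ℕ} [NeZero n₁] [NeZero n₂]
    (x : ZMod n₁ × ZMod n₂ → ℂ) (k : ZMod n₁ × ZMod n₂) : ℂ :=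
  (Real.sqrt (n₁ * n₂))⁻¹ * ∑ t : ZMod n₁ × ZMod n₂,
    x t * Complex.exp (-(2 * Real.pi * Complex.I) *
      ((k.1.val : ℂ) * (t.1.val : ℂ) / n₁ + (k.2.val : ℂ) * (t.2.val : ℂ) / n₂))

noncomputable def modulate2 {n₁ n₂ : ℕ} [NeZero n₁] [NeZero n₂] (s₁ s₂ : ℤ)
    (x : ZMod n₁ × ZMod n₂ → ℂ) : ZMod n₁ × ZMod n₂ → ℂ :=
  fun t => Complex.exp (2 * Real.pi * Complex.I *
      ((s₁ : ℂ) * (t.1.val : ℂ) / n₁ + (s₂ : ℂ) * (t.2.val : ℂ) / n₂)) * x t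

open Complex Finset

namespace PR2D

noncomputable def E (n : ℕ) (a b : ℤ) : ℂ :=
  Complex.exp (2 * Real.pi * Complex.I * a * b / n)

lemma E_congr (n : ℕ) [NeZero n] {a b : ℤ} (h : (a : ZMod n) = (b : ZMod n)) (v : ℤ) :
    E n a v = E n b v := by
  have hd : (n : ℤ) ∣ a - b := by
    rwa [← ZMod.intCast_zmod_eq_zero_iff_dvd, Int.cast_sub, sub_eq_zero]
  obtain ⟨m, hm⟩ := hd
  have hn : (n : ℂ) ≠ 0 := Nat.cast_ne_zero.mpr (NeZero.ne n)
  have ha : (a : ℂ) = b + n * m := by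
    have : a = b + n * m := by linarith
    exact_mod_cast congrArg (Int.cast : ℤ → ℂ) this
  unfold E
  have : 2 * (Real.pi : ℂ) * Complex.I * a * v / n
      = 2 * Real.pi * Complex.I * b * v / n + (m * v : ℤ) * (2 * Real.pi * Complex.I) := by
    rw [ha]; push_cast; field_simp
  rw [this, Complex.exp_add, Complex.exp_int_mul_two_pi_mul_I, mul_one]

lemma E_sum (n : ℕ) [NeZero n] (a : ℤ) :
    ∑ t : ZMod n, E n a t.val = if (a : ZMod n) = 0 then (n : ℂ) else 0 := by
  have hn : (n : ℂ) ≠ 0 := Nat.cast_ne_zero.mpr (NeZero.ne n)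
  set ζ : ℂ := Complex.exp (2 * Real.pi * Complex.I * a / n) with hζdef
  have key : ∀ v : ℕ, E n a v = ζ ^ v := by
    intro v
    rw [hζdef, ← Complex.exp_nat_mul]
    unfold E; congr 1; push_cast; ring
  have hre : ∑ t : ZMod n, E n a (t.val : ℤ) = ∑ i ∈ Finset.range n, ζ ^ i := by
    rw [Finset.sum_congr rfl fun t _ => key t.val]
    exact Finset.sum_nbij' (fun t => ZMod.val t) (fun i => (i : ZMod n))
      (fun t _ => Finset.mem_range.mpr (ZMod.val_lt t)) (fun i _ => Finset.mem_univ _)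
      (fun t _ => ZMod.natCast_rightInverse t)
      (fun i hi => ZMod.val_natCast_of_lt (Finset.mem_range.mp hi))
      (fun t _ => rfl)
  rw [hre]
  by_cases h : (a : ZMod n) = 0
  · obtain ⟨m, hm⟩ := (ZMod.intCast_zmod_eq_zero_iff_dvd a n).mp h
    have hζ1 : ζ = 1 := by
      rw [hζdef]
      have ham : (a : ℂ) = n * m := by exact_mod_cast congrArg (Int.cast : ℤ → ℂ) hm
      have : 2 * (Real.pi : ℂ) * Complex.I * a / n = (m : ℤ) * (2 * Real.pi * Complex.I) := by
        rw [ham]; field_simp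
      rw [this, Complex.exp_int_mul_two_pi_mul_I]
    simp [hζ1, h]
  · have hζn : ζ ^ n = 1 := by
      rw [hζdef, ← Complex.exp_nat_mul]
      have : (n : ℂ) * (2 * Real.pi * Complex.I * a / n) = (a : ℤ) * (2 * Real.pi * Complex.I) := by
        field_simp
      rw [this, Complex.exp_int_mul_two_pi_mul_I]
    have hζ1 : ζ ≠ 1 := by
      intro hc
      obtain ⟨m, hm⟩ := Complex.exp_eq_one_iff.mp (hζdef ▸ hc)
      apply h
      rw [ZMod.intCast_zmod_eq_zero_iff_dvd]
      refine ⟨m, ?_⟩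
      have hπ : (2 * (Real.pi : ℂ) * Complex.I) ≠ 0 := by
        simp [Real.pi_ne_zero, Complex.I_ne_zero, Complex.ofReal_ne_zero]
      have : (a : ℂ) = n * m := by
        field_simp at hm
        have h2 : (a : ℂ) * (2 * Real.pi * Complex.I) = (n * m) * (2 * Real.pi * Complex.I) := by
          linear_combination hm * (2 * Real.pi * Complex.I)
        exact mul_right_cancel₀ hπ h2
      exact_mod_cast this
    rw [geom_sum_eq hζ1, hζn, sub_self, zero_div, if_neg h]

variable {n₁ n₂ : ℕ} [NeZero n₁] [NeZero n₂]

lemma dft2_eq (x : ZMod n₁ × ZMod n₂ → ℂ) (k : ZMod n₁ × ZMod n₂) :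
    dft2 x k = (Real.sqrt (n₁ * n₂) : ℝ)⁻¹ * ∑ t : ZMod n₁ × ZMod n₂,
      x t * (E n₁ (-(k.1.val : ℤ)) t.1.val * E n₂ (-(k.2.val : ℤ)) t.2.val) := by
  unfold dft2
  congr 1
  apply Finset.sum_congr rfl
  intro t _
  congr 1
  unfold E
  rw [← Complex.exp_add]
  congr 1
  push_cast
  ring

lemma dft2_add_mul (c : ℂ) (x y : ZMod n₁ × ZMod n₂ → ℂ) (k : ZMod n₁ × ZMod n₂) :
    dft2 (fun t => x t + c * y t) k = dft2 x k + c * dft2 y k := by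
  unfold dft2
  have : (∑ t : ZMod n₁ × ZMod n₂, (x t + c * y t) * Complex.exp (-(2 * Real.pi * Complex.I) *
      ((k.1.val : ℂ) * (t.1.val : ℂ) / n₁ + (k.2.val : ℂ) * (t.2.val : ℂ) / n₂)))
      = (∑ t : ZMod n₁ × ZMod n₂, x t * Complex.exp (-(2 * Real.pi * Complex.I) *
      ((k.1.val : ℂ) * (t.1.val : ℂ) / n₁ + (k.2.val : ℂ) * (t.2.val : ℂ) / n₂)))
      + c * ∑ t : ZMod n₁ × ZMod n₂, y t * Complex.exp (-(2 * Real.pi * Complex.I) *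
      ((k.1.val : ℂ) * (t.1.val : ℂ) / n₁ + (k.2.val : ℂ) * (t.2.val : ℂ) / n₂)) := by
    rw [Finset.mul_sum, ← Finset.sum_add_distrib]
    apply Finset.sum_congr rfl
    intro t _
    ring
  rw [this]
  ring

lemma dft2_const_mul (c : ℂ) (x : ZMod n₁ × ZMod n₂ → ℂ) (k : ZMod n₁ × ZMod n₂) :
    dft2 (fun t => c * x t) k = c * dft2 x k := by
  have h0 : dft2 (fun _ : ZMod n₁ × ZMod n₂ => (0 : ℂ)) k = 0 := by
    unfold dft2; simp
  have := dft2_add_mul c (fun _ : ZMod n₁ × ZMod n₂ => (0 : ℂ)) x k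
  simpa [h0] using this

lemma dft2_modulate (s₁ s₂ : ℤ) (x : ZMod n₁ × ZMod n₂ → ℂ) (k : ZMod n₁ × ZMod n₂) :
    dft2 (modulate2 s₁ s₂ x) k = dft2 x (k - ((s₁ : ZMod n₁), (s₂ : ZMod n₂))) := by
  rw [dft2_eq, dft2_eq]
  congr 1
  apply Finset.sum_congr rfl
  intro t _
  unfold modulate2
  have hm : Complex.exp (2 * Real.pi * Complex.I *
      ((s₁ : ℂ) * (t.1.val : ℂ) / n₁ + (s₂ : ℂ) * (t.2.val : ℂ) / n₂))
      = E n₁ s₁ t.1.val * E n₂ s₂ t.2.val := by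
    unfold E; rw [← Complex.exp_add]; congr 1; push_cast; ring
  rw [hm]
  have e1 : E n₁ s₁ t.1.val * E n₁ (-(k.1.val : ℤ)) t.1.val
      = E n₁ (-(((k - ((s₁ : ZMod n₁), (s₂ : ZMod n₂))).1.val : ℤ))) t.1.val := by
    have hE : E n₁ s₁ t.1.val * E n₁ (-(k.1.val : ℤ)) t.1.val
        = E n₁ (s₁ + -(k.1.val : ℤ)) t.1.val := by
      unfold E; rw [← Complex.exp_add]; congr 1; push_cast; ring
    rw [hE]
    apply E_congr
    push_cast
    rw [ZMod.natCast_val, ZMod.natCast_val, ZMod.cast_id, ZMod.cast_id]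
    simp [Prod.fst_sub]
    ring
  have e2 : E n₂ s₂ t.2.val * E n₂ (-(k.2.val : ℤ)) t.2.val
      = E n₂ (-(((k - ((s₁ : ZMod n₁), (s₂ : ZMod n₂))).2.val : ℤ))) t.2.val := by
    have hE : E n₂ s₂ t.2.val * E n₂ (-(k.2.val : ℤ)) t.2.val
        = E n₂ (s₂ + -(k.2.val : ℤ)) t.2.val := by
      unfold E; rw [← Complex.exp_add]; congr 1; push_cast; ring
    rw [hE]
    apply E_congr
    push_cast
    rw [ZMod.natCast_val, ZMod.natCast_val, ZMod.cast_id, ZMod.cast_id]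
    simp [Prod.snd_sub]
    ring
  rw [← e1, ← e2]
  ring

lemma E_comb (n : ℕ) (a u t : ℤ) : E n (-a) u * E n a t = E n (t - u) a := by
  unfold E; rw [← Complex.exp_add]; congr 1; push_cast; ring

lemma sqrt_ne (hm : 0 < n₁ * n₂) : ((Real.sqrt (n₁ * n₂) : ℝ) : ℂ) ≠ 0 := by
  rw [Complex.ofReal_ne_zero]
  exact ne_of_gt (Real.sqrt_pos.mpr (by exact_mod_cast hm))

lemma dft2_inversion (x : ZMod n₁ × ZMod n₂ → ℂ) (t : ZMod n₁ × ZMod n₂) :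
    ∑ k : ZMod n₁ × ZMod n₂, dft2 x k * (E n₁ k.1.val t.1.val * E n₂ k.2.val t.2.val)
      = (Real.sqrt (n₁ * n₂) : ℝ) * x t := by
  have hn1 : (0:ℕ) < n₁ := Nat.pos_of_ne_zero (NeZero.ne n₁)
  have hn2 : (0:ℕ) < n₂ := Nat.pos_of_ne_zero (NeZero.ne n₂)
  have step1 : ∑ k : ZMod n₁ × ZMod n₂, dft2 x k * (E n₁ k.1.val t.1.val * E n₂ k.2.val t.2.val)
      = (Real.sqrt (n₁ * n₂) : ℝ)⁻¹ * ∑ u : ZMod n₁ × ZMod n₂, x u *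
          ∑ k : ZMod n₁ × ZMod n₂,
            (E n₁ ((t.1.val : ℤ) - (u.1.val : ℤ)) k.1.val * E n₂ ((t.2.val : ℤ) - (u.2.val : ℤ)) k.2.val) := by
    have e1 : ∀ k : ZMod n₁ × ZMod n₂,
        dft2 x k * (E n₁ k.1.val t.1.val * E n₂ k.2.val t.2.val)
        = (Real.sqrt (n₁ * n₂) : ℝ)⁻¹ * ∑ u : ZMod n₁ × ZMod n₂,
            x u * (E n₁ ((t.1.val : ℤ) - (u.1.val : ℤ)) k.1.val *
                   E n₂ ((t.2.val : ℤ) - (u.2.val : ℤ)) k.2.val) := by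
      intro k
      rw [dft2_eq, mul_assoc, Finset.sum_mul]
      congr 1
      apply Finset.sum_congr rfl
      intro u _
      rw [← E_comb n₁ (k.1.val : ℤ) (u.1.val : ℤ) (t.1.val : ℤ),
          ← E_comb n₂ (k.2.val : ℤ) (u.2.val : ℤ) (t.2.val : ℤ)]
      ring
    rw [Finset.sum_congr rfl fun k _ => e1 k, ← Finset.mul_sum, Finset.sum_comm]
    congr 1
    apply Finset.sum_congr rfl
    intro u _
    rw [Finset.mul_sum]
  rw [step1]
  have step2 : ∀ u : ZMod n₁ × ZMod n₂,
      (∑ k : ZMod n₁ × ZMod n₂,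
        (E n₁ ((t.1.val : ℤ) - (u.1.val : ℤ)) k.1.val * E n₂ ((t.2.val : ℤ) - (u.2.val : ℤ)) k.2.val))
      = (if t.1 = u.1 then (n₁ : ℂ) else 0) * (if t.2 = u.2 then (n₂ : ℂ) else 0) := by
    intro u
    have hsplit : (∑ k : ZMod n₁ × ZMod n₂,
        (E n₁ ((t.1.val : ℤ) - (u.1.val : ℤ)) k.1.val *
         E n₂ ((t.2.val : ℤ) - (u.2.val : ℤ)) k.2.val))
        = (∑ a : ZMod n₁, E n₁ ((t.1.val : ℤ) - (u.1.val : ℤ)) a.val) *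
          (∑ b : ZMod n₂, E n₂ ((t.2.val : ℤ) - (u.2.val : ℤ)) b.val) := by
      rw [Finset.sum_mul_sum]
      exact Fintype.sum_prod_type _
    rw [hsplit, E_sum, E_sum]
    have c1 : ((((t.1.val : ℤ) - (u.1.val : ℤ)) : ℤ) : ZMod n₁) = 0 ↔ t.1 = u.1 := by
      push_cast
      rw [ZMod.natCast_val, ZMod.natCast_val, ZMod.cast_id, ZMod.cast_id, sub_eq_zero]
    have c2 : ((((t.2.val : ℤ) - (u.2.val : ℤ)) : ℤ) : ZMod n₂) = 0 ↔ t.2 = u.2 := by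
      push_cast
      rw [ZMod.natCast_val, ZMod.natCast_val, ZMod.cast_id, ZMod.cast_id, sub_eq_zero]
    rw [if_congr c1 rfl rfl, if_congr c2 rfl rfl]
  rw [Finset.sum_congr rfl fun u _ => by rw [step2 u]]
  rw [Finset.sum_eq_single t]
  · simp only [if_pos rfl]
    have hsq : ((Real.sqrt (n₁ * n₂) : ℝ) : ℂ) * ((Real.sqrt (n₁ * n₂) : ℝ) : ℂ) = (n₁ : ℂ) * n₂ := by
      rw [← Complex.ofReal_mul, Real.mul_self_sqrt (by positivity)]
      push_cast; ring
    have hne := sqrt_ne (n₁ := n₁) (n₂ := n₂) (Nat.mul_pos hn1 hn2)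
    push_cast
    rw [inv_mul_eq_div, div_eq_iff hne]
    linear_combination (-(x t)) * hsq
  · intro u _ hu
    by_cases h1 : t.1 = u.1
    · have h2 : ¬ t.2 = u.2 := fun h2 => hu (Prod.ext h1 h2).symm
      simp [h2]
    · simp [h1]
  · intro h; exact absurd (Finset.mem_univ t) h

lemma dft2_inj {x y : ZMod n₁ × ZMod n₂ → ℂ} (h : ∀ k, dft2 x k = dft2 y k) : x = y := by
  funext t
  have e : (∑ k : ZMod n₁ × ZMod n₂, dft2 x k * (E n₁ k.1.val t.1.val * E n₂ k.2.val t.2.val))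
      = ∑ k : ZMod n₁ × ZMod n₂, dft2 y k * (E n₁ k.1.val t.1.val * E n₂ k.2.val t.2.val) :=
    Finset.sum_congr rfl fun k _ => by rw [h k]
  have hne := sqrt_ne (n₁ := n₁) (n₂ := n₂)
    (Nat.mul_pos (Nat.pos_of_ne_zero (NeZero.ne n₁)) (Nat.pos_of_ne_zero (NeZero.ne n₂)))
  exact mul_left_cancel₀ hne
    (((dft2_inversion x t).symm.trans e).trans (dft2_inversion y t))

lemma polar {a b a' b' : ℂ} (h1 : ‖a'‖ = ‖a‖)
    (h1' : ‖b'‖ = ‖b‖)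
    (h2 : ‖a' + b'‖ = ‖a + b‖)
    (h3 : ‖a' - Complex.I * b'‖ = ‖a - Complex.I * b‖) :
    a' * (starRingEnd ℂ) b' = a * (starRingEnd ℂ) b := by
  have sq : ∀ {u v : ℂ}, ‖u‖ = ‖v‖ → Complex.normSq u = Complex.normSq v := by
    intro u v h
    rw [← Complex.sq_norm, ← Complex.sq_norm, h]
  have e0 := sq h1
  have e0' := sq h1'
  have e2 := sq h2
  have e3 := sq h3
  simp only [Complex.normSq_apply, Complex.add_re, Complex.add_im, Complex.sub_re,
    Complex.sub_im, Complex.mul_re, Complex.mul_im, Complex.I_re, Complex.I_im] at e0 e0' e2 e3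
  ring_nf at e0 e0' e2 e3
  apply Complex.ext <;>
    simp only [Complex.mul_re, Complex.mul_im, Complex.conj_re, Complex.conj_im] <;>
    ring_nf <;>
    linarith [e0, e0', e2, e3]

lemma gen {s₁ s₂ : ℤ} (hs₁ : Int.gcd s₁ n₁ = 1) (hs₂ : Int.gcd s₂ n₂ = 1)
    (hn : Nat.gcd n₁ n₂ = 1) (k : ZMod n₁ × ZMod n₂) :
    ∃ m : ℕ, m • (((s₁ : ZMod n₁), (s₂ : ZMod n₂)) : ZMod n₁ × ZMod n₂) = k := by
  haveI : NeZero (n₁ * n₂) := ⟨mul_ne_zero (NeZero.ne _) (NeZero.ne _)⟩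
  obtain ⟨u, v, huv⟩ := Int.isCoprime_iff_gcd_eq_one.mpr hs₁
  obtain ⟨u', v', huv'⟩ := Int.isCoprime_iff_gcd_eq_one.mpr hs₂
  have hu1 : (u : ZMod n₁) * (s₁ : ZMod n₁) = 1 := by
    have := congrArg (Int.cast : ℤ → ZMod n₁) huv
    push_cast at this
    simpa [ZMod.natCast_self] using this
  have hu2 : (u' : ZMod n₂) * (s₂ : ZMod n₂) = 1 := by
    have := congrArg (Int.cast : ℤ → ZMod n₂) huv'
    push_cast at this
    simpa [ZMod.natCast_self] using this
  have hcop : Nat.Coprime n₁ n₂ := hn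
  let e := ZMod.chineseRemainder hcop
  set tgt : ZMod n₁ × ZMod n₂ := ((u : ZMod n₁) * k.1, (u' : ZMod n₂) * k.2) with htgt
  set m : ℕ := (e.symm tgt).val with hmdef
  refine ⟨m, ?_⟩
  have hm : ((m : ℕ) : ZMod (n₁ * n₂)) = e.symm tgt :=
    ZMod.natCast_rightInverse _
  have happ : e ((m : ℕ) : ZMod (n₁ * n₂)) = tgt := by
    rw [hm]; exact e.apply_symm_apply _
  have hmap : e ((m : ℕ) : ZMod (n₁ * n₂)) = ((m : ℕ) : ZMod n₁ × ZMod n₂) :=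
    map_natCast e m
  have hprod : ((m : ℕ) : ZMod n₁ × ZMod n₂) = (((m : ℕ) : ZMod n₁), ((m : ℕ) : ZMod n₂)) := rfl
  have hc : (((m : ℕ) : ZMod n₁), ((m : ℕ) : ZMod n₂)) = tgt :=
    (hprod.symm.trans hmap.symm).trans happ
  have hc1 : ((m : ℕ) : ZMod n₁) = (u : ZMod n₁) * k.1 := congrArg Prod.fst hc
  have hc2 : ((m : ℕ) : ZMod n₂) = (u' : ZMod n₂) * k.2 := congrArg Prod.snd hc
  have hsm : m • (((s₁ : ZMod n₁), (s₂ : ZMod n₂)) : ZMod n₁ × ZMod n₂)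
      = (m • (s₁ : ZMod n₁), m • (s₂ : ZMod n₂)) := rfl
  rw [hsm, Prod.ext_iff]
  constructor
  · show m • (s₁ : ZMod n₁) = k.1
    rw [nsmul_eq_mul, hc1]
    calc (u : ZMod n₁) * k.1 * (s₁ : ZMod n₁) = ((u : ZMod n₁) * (s₁ : ZMod n₁)) * k.1 := by ring
      _ = k.1 := by rw [hu1, one_mul]
  · show m • (s₂ : ZMod n₂) = k.2
    rw [nsmul_eq_mul, hc2]
    calc (u' : ZMod n₂) * k.2 * (s₂ : ZMod n₂) = ((u' : ZMod n₂) * (s₂ : ZMod n₂)) * k.2 := by ring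
      _ = k.2 := by rw [hu2, one_mul]

end PR2D

theorem phase_retrieval_2D (n₁ n₂ : ℕ) [NeZero n₁] [NeZero n₂] (s₁ s₂ : ℤ)
    (hs₁ : Int.gcd s₁ n₁ = 1) (hs₂ : Int.gcd s₂ n₂ = 1) (hn : Nat.gcd n₁ n₂ = 1)
    (x y : ZMod n₁ × ZMod n₂ → ℂ) (hx : ∀ k, dft2 x k ≠ 0)
    (h1 : ∀ k, ‖dft2 y k‖ = ‖dft2 x k‖)
    (h2 : ∀ k, ‖dft2 (fun t => y t + modulate2 s₁ s₂ y t) k‖ =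
               ‖dft2 (fun t => x t + modulate2 s₁ s₂ x t) k‖)
    (h3 : ∀ k, ‖dft2 (fun t => y t - Complex.I * modulate2 s₁ s₂ y t) k‖ =
               ‖dft2 (fun t => x t - Complex.I * modulate2 s₁ s₂ x t) k‖) :
    ∃ c : ℂ, ‖c‖ = 1 ∧ y = fun t => c * x t := by
  classical
  have H2 : ∀ (z : ZMod n₁ × ZMod n₂ → ℂ) (k : ZMod n₁ × ZMod n₂),
      dft2 (fun t => z t + modulate2 s₁ s₂ z t) k
        = dft2 z k + dft2 z (k - ((s₁ : ZMod n₁), (s₂ : ZMod n₂))) := by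
    intro z k
    have hfun : (fun t => z t + modulate2 s₁ s₂ z t)
        = fun t => z t + (1 : ℂ) * modulate2 s₁ s₂ z t := by funext t; ring
    rw [hfun, PR2D.dft2_add_mul, one_mul, PR2D.dft2_modulate]
  have H3 : ∀ (z : ZMod n₁ × ZMod n₂ → ℂ) (k : ZMod n₁ × ZMod n₂),
      dft2 (fun t => z t - Complex.I * modulate2 s₁ s₂ z t) k
        = dft2 z k - Complex.I * dft2 z (k - ((s₁ : ZMod n₁), (s₂ : ZMod n₂))) := by
    intro z k
    have hfun : (fun t => z t - Complex.I * modulate2 s₁ s₂ z t)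
        = fun t => z t + (-Complex.I) * modulate2 s₁ s₂ z t := by funext t; ring
    rw [hfun, PR2D.dft2_add_mul, PR2D.dft2_modulate]
    ring
  have key : ∀ k : ZMod n₁ × ZMod n₂,
      dft2 y k * dft2 x (k - ((s₁ : ZMod n₁), (s₂ : ZMod n₂)))
        = dft2 x k * dft2 y (k - ((s₁ : ZMod n₁), (s₂ : ZMod n₂))) := by
    intro k
    have h2' := h2 k
    rw [H2 y k, H2 x k] at h2'
    have h3' := h3 k
    rw [H3 y k, H3 x k] at h3'
    have hp := PR2D.polar (h1 k) (h1 (k - ((s₁ : ZMod n₁), (s₂ : ZMod n₂)))) h2' h3'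
    set b := dft2 x (k - ((s₁ : ZMod n₁), (s₂ : ZMod n₂))) with hbdef
    set b' := dft2 y (k - ((s₁ : ZMod n₁), (s₂ : ZMod n₂))) with hbdef'
    have hns : Complex.normSq b' = Complex.normSq b := by
      rw [← Complex.sq_norm, ← Complex.sq_norm, h1 (k - ((s₁ : ZMod n₁), (s₂ : ZMod n₂)))]
    have hbb : (starRingEnd ℂ) b' * b' = (starRingEnd ℂ) b * b := by
      rw [mul_comm, Complex.mul_conj, hns, ← Complex.mul_conj, mul_comm]
    have hcb : (starRingEnd ℂ) b ≠ 0 := by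
      simpa using hx (k - ((s₁ : ZMod n₁), (s₂ : ZMod n₂)))
    apply mul_left_cancel₀ hcb
    linear_combination b' * hp - dft2 y k * hbb
  have const : ∀ m : ℕ,
      dft2 y (m • (((s₁ : ZMod n₁), (s₂ : ZMod n₂)) : ZMod n₁ × ZMod n₂)) * dft2 x 0
        = dft2 x (m • (((s₁ : ZMod n₁), (s₂ : ZMod n₂)) : ZMod n₁ × ZMod n₂)) * dft2 y 0 := by
    intro m
    induction m with
    | zero => rw [zero_smul]; ring
    | succ m ih =>
      have hk := key ((m + 1) • (((s₁ : ZMod n₁), (s₂ : ZMod n₂)) : ZMod n₁ × ZMod n₂))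
      have hsub : (m + 1) • (((s₁ : ZMod n₁), (s₂ : ZMod n₂)) : ZMod n₁ × ZMod n₂)
          - ((s₁ : ZMod n₁), (s₂ : ZMod n₂))
          = m • (((s₁ : ZMod n₁), (s₂ : ZMod n₂)) : ZMod n₁ × ZMod n₂) := by
        rw [succ_nsmul]
        exact add_sub_cancel_right _ _
      rw [hsub] at hk
      apply mul_left_cancel₀ (hx (m • (((s₁ : ZMod n₁), (s₂ : ZMod n₂)) : ZMod n₁ × ZMod n₂)))
      linear_combination dft2 x 0 * hk
        + dft2 x ((m + 1) • (((s₁ : ZMod n₁), (s₂ : ZMod n₂)) : ZMod n₁ × ZMod n₂)) * ih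
  have all : ∀ k : ZMod n₁ × ZMod n₂, dft2 y k * dft2 x 0 = dft2 x k * dft2 y 0 := by
    intro k
    obtain ⟨m, hm⟩ := PR2D.gen hs₁ hs₂ hn k
    rw [← hm]
    exact const m
  refine ⟨dft2 y 0 / dft2 x 0, ?_, ?_⟩
  · rw [norm_div, h1 0, div_self (norm_ne_zero_iff.mpr (hx 0))]
  · apply PR2D.dft2_inj
    intro k
    rw [PR2D.dft2_const_mul]
    rw [div_mul_eq_mul_div, eq_div_iff (hx 0)]
    linear_combination all k
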